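/- Let c > 0 and define φ(ζ) = −(3c/(1 + c)) sec²((√c/2) · ζ). Then at every ζ ∈ ℝ with cos((√c/2)ζ) ≠ 0, φ satisfies φ''(ζ) + ((1 + c)/2)φ(ζ)² + cφ(ζ) = 0. -/

import Mathlib

open Real
set_option maxHeartbeats 1000000 in

/-- For `c > 0`, the profile `φ(ζ) = −(3c/(1 + c)) sec²((√c/2) ζ)` satisfies
`φ'' + ((1 + c)/2)φ² + cφ = 0` at every `ζ` where `cos((√c/2)ζ) ≠ 0`. -/
theorem slow_periodic_wave_profile (c : ℝ) (hc : 0 < c) :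
    ∀ ζ : ℝ, Real.cos ((Real.sqrt c / 2) * ζ) ≠ 0 →
      deriv (deriv (fun s : ℝ =>
          -(3 * c / (1 + c)) * (1 / Real.cos ((Real.sqrt c / 2) * s)) ^ 2)) ζ
        + ((1 + c) / 2) *
          (-(3 * c / (1 + c)) * (1 / Real.cos ((Real.sqrt c / 2) * ζ)) ^ 2) ^ 2
        + c * (-(3 * c / (1 + c)) * (1 / Real.cos ((Real.sqrt c / 2) * ζ)) ^ 2) = 0 := by
  intro ζ hζ
  set a : ℝ := Real.sqrt c / 2 with ha
  set K : ℝ := -(3 * c / (1 + c)) with hK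
  -- first derivative formula
  have hφ : ∀ s : ℝ, Real.cos (a * s) ≠ 0 →
      HasDerivAt (fun s : ℝ => K * (1 / Real.cos (a * s)) ^ 2)
        (2 * a * K * Real.sin (a * s) / (Real.cos (a * s)) ^ 3) s := by
    intro s hs
    have h1 : HasDerivAt (fun t : ℝ => Real.cos (a * t)) (-Real.sin (a * s) * a) s := by
      simpa [Function.comp_def] using (Real.hasDerivAt_cos (a * s)).comp s ((hasDerivAt_id s).const_mul a)
    have h2 := ((h1.inv hs).pow 2).const_mul K
    have : (fun t : ℝ => K * ((Real.cos (a * t))⁻¹) ^ 2)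
        = fun t : ℝ => K * (1 / Real.cos (a * t)) ^ 2 := by
      funext t; rw [one_div]
    simp only [Pi.pow_apply, Pi.inv_apply] at h2
    rw [this] at h2
    refine h2.congr_deriv ?_
    rw [show (2:ℕ) - 1 = 1 from rfl, pow_one]; push_cast
    field_simp
  -- the set where cos ≠ 0 is open
  have hopen : IsOpen {s : ℝ | Real.cos (a * s) ≠ 0} := by
    have : Continuous fun s : ℝ => Real.cos (a * s) := by continuity
    exact isOpen_compl_singleton.preimage this
  have hmem : ζ ∈ {s : ℝ | Real.cos (a * s) ≠ 0} := hζ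
  have hev : deriv (fun s : ℝ => K * (1 / Real.cos (a * s)) ^ 2)
      =ᶠ[nhds ζ] fun s => 2 * a * K * Real.sin (a * s) / (Real.cos (a * s)) ^ 3 := by
    filter_upwards [hopen.mem_nhds hmem] with s hs
    exact (hφ s hs).deriv
  have h1 : HasDerivAt (fun t : ℝ => Real.cos (a * t)) (-Real.sin (a * ζ) * a) ζ := by
    simpa [Function.comp_def] using (Real.hasDerivAt_cos (a * ζ)).comp ζ ((hasDerivAt_id ζ).const_mul a)
  have hsin : HasDerivAt (fun t : ℝ => 2 * a * K * Real.sin (a * t))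
      (2 * a * K * (Real.cos (a * ζ) * a)) ζ := by
    have := (Real.hasDerivAt_sin (a * ζ)).comp ζ ((hasDerivAt_id ζ).const_mul a)
    simpa [mul_comm, mul_assoc, mul_left_comm] using this.const_mul (2 * a * K)
  have hcos3 : HasDerivAt (fun t : ℝ => (Real.cos (a * t)) ^ 3)
      (3 * (Real.cos (a * ζ)) ^ 2 * (-Real.sin (a * ζ) * a)) ζ := by
    simpa [Pi.pow_def] using h1.pow 3
  have hden : (Real.cos (a * ζ)) ^ 3 ≠ 0 := pow_ne_zero _ hζ
  have hg : HasDerivAt (fun s : ℝ => 2 * a * K * Real.sin (a * s) / (Real.cos (a * s)) ^ 3)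
      ((2 * a * K * (Real.cos (a * ζ) * a) * (Real.cos (a * ζ)) ^ 3
        - 2 * a * K * Real.sin (a * ζ) * (3 * (Real.cos (a * ζ)) ^ 2 * (-Real.sin (a * ζ) * a)))
        / ((Real.cos (a * ζ)) ^ 3) ^ 2) ζ := hsin.div hcos3 hden
  have hdd : deriv (deriv (fun s : ℝ => K * (1 / Real.cos (a * s)) ^ 2)) ζ
      = (2 * a * K * (Real.cos (a * ζ) * a) * (Real.cos (a * ζ)) ^ 3
        - 2 * a * K * Real.sin (a * ζ) * (3 * (Real.cos (a * ζ)) ^ 2 * (-Real.sin (a * ζ) * a)))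
        / ((Real.cos (a * ζ)) ^ 3) ^ 2 := by
    rw [hev.deriv_eq]; exact hg.deriv
  rw [hdd]
  have hq2 : Real.sqrt c ^ 2 = c := Real.sq_sqrt hc.le
  have ha2 : a ^ 2 = c / 4 := by rw [ha, div_pow, hq2]; norm_num
  have h1c : (1 : ℝ) + c ≠ 0 := by positivity
  have hs2 : Real.sin (a * ζ) ^ 2 = 1 - Real.cos (a * ζ) ^ 2 := Real.sin_sq (a * ζ)
  clear hev hdd hg hφ hsin hcos3 h1 hopen hmem ha hq2
  set co := Real.cos (a * ζ) with hco
  set si := Real.sin (a * ζ) with hsi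
  rw [hK]
  field_simp
  ring_nf
  rw [ha2, hs2]
  ring
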